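/- For distinct computational basis bit strings i ≠ j of length m, Σ_{ρ ∈ S_4} Tr[T_ρ^A] ⟨iijj| T_ρ^B |iijj⟩ = Tr[Π_2^{sym,A}]² = d_A²(d_A+1)², where T_ρ = T_ρ^A ⊗ T_ρ^B is the factorization of the permutation operator on ((ℂ^{d_A}) ⊗ (ℂ^{d_B}))^{⊗4}. -/

import Mathlib

open Matrix BigOperators
open scoped Classical

/-- Tensor power of a matrix: `O^{⊗k}` acting on `ι^k`. -/
noncomputable def tensorPow {ι : Type} [Fintype ι] (O : Matrix ι ι ℂ) (k : ℕ) :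
    Matrix (Fin k → ι) (Fin k → ι) ℂ :=
  fun x y => ∏ i, O (x i) (y i)

/-- Permutation operator `T_ρ` on `H^{⊗k}`: `T_ρ (v_1 ⊗ ⋯ ⊗ v_k) = v_{ρ⁻¹(1)} ⊗ ⋯`. -/
noncomputable def permOp (ι : Type) [Fintype ι] {k : ℕ} (ρ : Equiv.Perm (Fin k)) :
    Matrix (Fin k → ι) (Fin k → ι) ℂ :=
  fun x y => if x = y ∘ ρ.symm then 1 else 0

/-- Unnormalized projector onto symmetric subspace. -/
noncomputable def symProj (ι : Type) [Fintype ι] (k : ℕ) :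
    Matrix (Fin k → ι) (Fin k → ι) ℂ :=
  ∑ ρ : Equiv.Perm (Fin k), permOp ι ρ

/-- Single-qubit Pauli matrices I, X, Y, Z. -/
noncomputable def pauli : Fin 4 → Matrix (Fin 2) (Fin 2) ℂ
  | 0 => 1
  | 1 => !![0, 1; 1, 0]
  | 2 => !![0, -Complex.I; Complex.I, 0]
  | 3 => !![1, 0; 0, -1]

/-- Pauli string `P_{s 0} ⊗ ⋯ ⊗ P_{s (n-1)}` on `n` qubits. -/
noncomputable def pauliString {n : ℕ} (s : Fin n → Fin 4) :
    Matrix (Fin n → Fin 2) (Fin n → Fin 2) ℂ :=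
  fun x y => ∏ i, pauli (s i) (x i) (y i)

/-- `Q = (1/d²) Σ_P P^{⊗4}` on `(ℂ^d)^{⊗4}`, `d = 2^n`. -/
noncomputable def Qop (n : ℕ) :
    Matrix (Fin 4 → (Fin n → Fin 2)) (Fin 4 → (Fin n → Fin 2)) ℂ :=
  (((2 : ℂ) ^ n) ^ 2)⁻¹ • ∑ s : Fin n → Fin 4, tensorPow (pauliString s) 4

def e4 (ι : Type) : (ι × ι × ι × ι) ≃ (Fin 4 → ι) where
  toFun p := ![p.1, p.2.1, p.2.2.1, p.2.2.2]
  invFun x := (x 0, x 1, x 2, x 3)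
  left_inv p := rfl
  right_inv x := by funext k; fin_cases k <;> rfl

def e2 (ι : Type) : (ι × ι) ≃ (Fin 2 → ι) where
  toFun p := ![p.1, p.2]
  invFun x := (x 0, x 1)
  left_inv p := rfl
  right_inv x := by funext k; fin_cases k <;> rfl

lemma sum_fin4 {ι : Type} [Fintype ι] (f : (Fin 4 → ι) → ℂ) :
    ∑ x, f x = ∑ a, ∑ b, ∑ c, ∑ d, f ![a, b, c, d] := by
  rw [← Equiv.sum_comp (e4 ι) f]
  simp [e4, Fintype.sum_prod_type]
  rfl

lemma sum_fin2 {ι : Type} [Fintype ι] (f : (Fin 2 → ι) → ℂ) :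
    ∑ x, f x = ∑ a, ∑ b, f ![a, b] := by
  rw [← Equiv.sum_comp (e2 ι) f]
  simp [e2, Fintype.sum_prod_type]
  rfl

lemma trace_permOp {ι : Type} [Fintype ι] {k : ℕ} (σ : Equiv.Perm (Fin k)) :
    (permOp ι σ).trace = ∑ x : Fin k → ι, if x = x ∘ σ.symm then 1 else 0 := by
  simp [Matrix.trace, Matrix.diag, permOp]

lemma tr_id4 {ι : Type} [Fintype ι] :
    (permOp ι (1 : Equiv.Perm (Fin 4))).trace = (Fintype.card ι : ℂ) ^ 4 := by
  rw [trace_permOp]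
  simp [Function.comp, Equiv.Perm.one_symm]

lemma tr_sw01 {ι : Type} [Fintype ι] :
    (permOp ι (Equiv.swap (0:Fin 4) 1)).trace = (Fintype.card ι : ℂ) ^ 3 := by
  rw [trace_permOp, sum_fin4]
  have h : ∀ a b c d : ι, ((![a,b,c,d] : Fin 4 → ι) = ![a,b,c,d] ∘ (Equiv.swap (0:Fin 4) 1).symm) ↔ a = b := by
    intro a b c d
    constructor
    · intro h; have := congrFun h 0; simpa [Equiv.swap_apply_def] using this
    · intro h; subst h; funext k; fin_cases k <;> simp [Equiv.swap_apply_def]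
  simp only [h]
  simp [Finset.sum_ite_eq, Finset.sum_const, Finset.card_univ, mul_comm]
  ring

lemma tr_sw23 {ι : Type} [Fintype ι] :
    (permOp ι (Equiv.swap (2:Fin 4) 3)).trace = (Fintype.card ι : ℂ) ^ 3 := by
  rw [trace_permOp, sum_fin4]
  have h : ∀ a b c d : ι, ((![a,b,c,d] : Fin 4 → ι) = ![a,b,c,d] ∘ (Equiv.swap (2:Fin 4) 3).symm) ↔ c = d := by
    intro a b c d
    constructor
    · intro h; have := congrFun h 2; simpa [Equiv.swap_apply_def] using this
    · intro h; subst h; funext k; fin_cases k <;> simp [Equiv.swap_apply_def]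
  simp only [h]
  simp [Finset.sum_ite_eq, Finset.sum_const, Finset.card_univ, mul_comm]
  ring

lemma tr_prod {ι : Type} [Fintype ι] :
    (permOp ι (Equiv.swap (0:Fin 4) 1 * Equiv.swap 2 3)).trace = (Fintype.card ι : ℂ) ^ 2 := by
  rw [trace_permOp, sum_fin4]
  have h : ∀ a b c d : ι, ((![a,b,c,d] : Fin 4 → ι) = ![a,b,c,d] ∘ (Equiv.swap (0:Fin 4) 1 * Equiv.swap 2 3).symm) ↔ (a = b ∧ c = d) := by
    intro a b c d
    constructor
    · intro h
      refine ⟨?_, ?_⟩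
      · have := congrFun h 0
        rw [Function.comp_apply, show (Equiv.symm ((Equiv.swap (0:Fin 4) 1 * Equiv.swap (2:Fin 4) 3 : Equiv.Perm (Fin 4))) : Fin 4 → Fin 4) (0 : Fin 4) = (1 : Fin 4) from by decide] at this
        simpa using this
      · have := congrFun h 2
        rw [Function.comp_apply, show (Equiv.symm ((Equiv.swap (0:Fin 4) 1 * Equiv.swap (2:Fin 4) 3 : Equiv.Perm (Fin 4))) : Fin 4 → Fin 4) (2 : Fin 4) = (3 : Fin 4) from by decide] at this
        simpa using this
    · rintro ⟨h1, h2⟩; subst h1; subst h2; funext k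
      fin_cases k <;> rfl
  simp only [h]
  simp [ite_and, Finset.sum_ite_eq, Finset.sum_const, Finset.card_univ, mul_comm]
  ring

lemma tr_id2 {ι : Type} [Fintype ι] :
    (permOp ι (1 : Equiv.Perm (Fin 2))).trace = (Fintype.card ι : ℂ) ^ 2 := by
  rw [trace_permOp]
  simp [Function.comp, Equiv.Perm.one_symm]

lemma tr_sw2 {ι : Type} [Fintype ι] :
    (permOp ι (Equiv.swap (0:Fin 2) 1)).trace = (Fintype.card ι : ℂ) := by
  rw [trace_permOp, sum_fin2]
  have h : ∀ a b : ι, ((![a,b] : Fin 2 → ι) = ![a,b] ∘ (Equiv.swap (0:Fin 2) 1).symm) ↔ a = b := by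
    intro a b
    constructor
    · intro h; have := congrFun h 0; simpa [Equiv.swap_apply_def] using this
    · intro h; subst h; funext k; fin_cases k <;> simp [Equiv.swap_apply_def]
  simp only [h]
  simp [Finset.sum_ite_eq, Finset.sum_const, Finset.card_univ]

/-- for `i ≠ j`,
`Σ_{ρ ∈ S_4} Tr[T_ρ^A] ⟨iijj|T_ρ^B|iijj⟩ = Tr[Π_2^{sym,A}]² = d_A²(d_A+1)²`. -/
theorem sum_trace_permOp_iijj {ιA ιB : Type} [Fintype ιA] [Fintype ιB]
    (i j : ιB) (hij : i ≠ j) :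
    (∑ ρ : Equiv.Perm (Fin 4),
        (permOp ιA ρ).trace * permOp ιB ρ ![i, i, j, j] ![i, i, j, j])
      = ((symProj ιA 2).trace) ^ 2 ∧
    (∑ ρ : Equiv.Perm (Fin 4),
        (permOp ιA ρ).trace * permOp ιB ρ ![i, i, j, j] ![i, i, j, j])
      = (Fintype.card ιA : ℂ) ^ 2 * ((Fintype.card ιA : ℂ) + 1) ^ 2 := by

  set d : ℂ := (Fintype.card ιA : ℂ) with hd
  have hg : ∀ p q : Fin 2, ((![i, j] : Fin 2 → ιB) p = ![i, j] q) ↔ p = q := by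
    intro p q
    fin_cases p <;> fin_cases q <;> simp [hij, hij.symm]
  have hdec : ∀ ρ : Equiv.Perm (Fin 4),
      ((![0, 0, 1, 1] : Fin 4 → Fin 2) = ![0, 0, 1, 1] ∘ ρ.symm) ↔
      (ρ = 1 ∨ ρ = Equiv.swap 0 1 ∨ ρ = Equiv.swap 2 3 ∨
        ρ = Equiv.swap 0 1 * Equiv.swap 2 3) := by decide
  have key : ∀ ρ : Equiv.Perm (Fin 4),
      ((![i, i, j, j] : Fin 4 → ιB) = ![i, i, j, j] ∘ ρ.symm) ↔
      (ρ = 1 ∨ ρ = Equiv.swap 0 1 ∨ ρ = Equiv.swap 2 3 ∨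
        ρ = Equiv.swap 0 1 * Equiv.swap 2 3) := by
    intro ρ
    have hv : ∀ t : Fin 4,
        (![i, i, j, j] : Fin 4 → ιB) t = ![i, j] ((![0, 0, 1, 1] : Fin 4 → Fin 2) t) := by
      intro t; fin_cases t <;> rfl
    have step : ((![i, i, j, j] : Fin 4 → ιB) = ![i, i, j, j] ∘ ρ.symm) ↔
        ((![0, 0, 1, 1] : Fin 4 → Fin 2) = ![0, 0, 1, 1] ∘ ρ.symm) := by
      rw [funext_iff, funext_iff]
      apply forall_congr'
      intro k
      simp only [Function.comp_apply, hv, hg]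
    rw [step]
    exact hdec ρ
  have hsum : (∑ ρ : Equiv.Perm (Fin 4),
      (permOp ιA ρ).trace * permOp ιB ρ ![i, i, j, j] ![i, i, j, j])
      = d ^ 4 + d ^ 3 + d ^ 3 + d ^ 2 := by
    have expand : ∀ ρ : Equiv.Perm (Fin 4),
        (permOp ιA ρ).trace * permOp ιB ρ ![i, i, j, j] ![i, i, j, j]
        = if (ρ = 1 ∨ ρ = Equiv.swap 0 1 ∨ ρ = Equiv.swap 2 3 ∨
            ρ = Equiv.swap 0 1 * Equiv.swap 2 3) then (permOp ιA ρ).trace else 0 := by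
      intro ρ
      rw [permOp]
      simp only [← key ρ]
      split <;> simp
    simp only [expand]
    rw [Finset.sum_ite, Finset.sum_const, smul_zero, add_zero]
    have hfil : Finset.univ.filter (fun ρ : Equiv.Perm (Fin 4) =>
        (ρ = 1 ∨ ρ = Equiv.swap 0 1 ∨ ρ = Equiv.swap 2 3 ∨
          ρ = Equiv.swap 0 1 * Equiv.swap 2 3))
        = {1, Equiv.swap 0 1, Equiv.swap 2 3, Equiv.swap 0 1 * Equiv.swap 2 3} := by
      decide
    rw [hfil]
    rw [Finset.sum_insert (by decide), Finset.sum_insert (by decide),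
      Finset.sum_insert (by decide), Finset.sum_singleton]
    rw [tr_id4, tr_sw01, tr_sw23, tr_prod]
    ring
  have hsym : (symProj ιA 2).trace = d ^ 2 + d := by
    rw [symProj, Matrix.trace_sum]
    rw [show (Finset.univ : Finset (Equiv.Perm (Fin 2))) = {1, Equiv.swap 0 1} from by decide]
    rw [Finset.sum_insert (by decide), Finset.sum_singleton, tr_id2, tr_sw2]
  constructor
  · rw [hsum, hsym]; ring
  · rw [hsum]; ring
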